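/- Let n ≥ 3 be an integer, let G be a finite abelian group isomorphic to C_2 ⊕ C_2 ⊕ C_{2n}, and let {f_1, f_2, f_3} be a basis of G with ord(f_1) = ord(f_2) = 2 and ord(f_3) = 2n. For every v ∈ [0, n−1] and every a ∈ [2, n−1], the sequence S = f_3^{2n−1−2v} (f_3+f_2)^{2v+1} f_2 (a f_3+f_1) ((1−a) f_3+f_2+f_1), of length 2n+3, contains no nonempty zero-sum subsequence of length at most 2n. -/
import Mathlib


/-- The sequences of type (η1) contain no short zero-sum subsequence. -/
theorem stmt_15 (n : ℕ) (hn : 3 ≤ n) (G : Type*) [AddCommGroup G] [Fintype G]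
    (hG : Nonempty (G ≃+ (ZMod 2 × ZMod 2 × ZMod (2 * n))))
    (f1 f2 f3 : G)
    (hgen : AddSubgroup.closure ({f1, f2, f3} : Set G) = ⊤)
    (hind : ∀ a b c : ℤ, a • f1 + b • f2 + c • f3 = 0 →
      a • f1 = 0 ∧ b • f2 = 0 ∧ c • f3 = 0)
    (ho1 : addOrderOf f1 = 2) (ho2 : addOrderOf f2 = 2) (ho3 : addOrderOf f3 = 2 * n)
    (v a : ℕ) (hv : v ≤ n - 1) (ha : 2 ≤ a) (ha' : a ≤ n - 1)
    (S : Multiset G)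
    (hS : S = Multiset.replicate (2 * n - 1 - 2 * v) f3
            + Multiset.replicate (2 * v + 1) (f3 + f2)
            + {f2, (a : ℤ) • f3 + f1, (1 - (a : ℤ)) • f3 + f2 + f1}) :
    ¬ ∃ T : Multiset G, T ≤ S ∧ T ≠ 0 ∧ Multiset.card T ≤ 2 * n ∧ T.sum = 0 := by
  classical
  rintro ⟨T, hT, hT0, hcard, hsum⟩
  -- the key consequence of independence and orders
  have key : ∀ c1 c2 c3 : ℤ, c1 • f1 + c2 • f2 + c3 • f3 = 0 →
      (2:ℤ) ∣ c1 ∧ (2:ℤ) ∣ c2 ∧ ((2*n : ℕ) : ℤ) ∣ c3 := by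
    intro c1 c2 c3 h
    obtain ⟨h1, h2, h3⟩ := hind c1 c2 c3 h
    refine ⟨?_, ?_, ?_⟩
    · have := addOrderOf_dvd_iff_zsmul_eq_zero.mpr h1
      rwa [ho1] at this
    · have := addOrderOf_dvd_iff_zsmul_eq_zero.mpr h2
      rwa [ho2] at this
    · have := addOrderOf_dvd_iff_zsmul_eq_zero.mpr h3
      rwa [ho3] at this
  obtain ⟨e1, he1⟩ : ∃ e : G, e = f3 := ⟨_, rfl⟩
  obtain ⟨e2, he2⟩ : ∃ e : G, e = f3 + f2 := ⟨_, rfl⟩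
  obtain ⟨e3, he3⟩ : ∃ e : G, e = f2 := ⟨_, rfl⟩
  obtain ⟨e4, he4⟩ : ∃ e : G, e = (a : ℤ) • f3 + f1 := ⟨_, rfl⟩
  obtain ⟨e5, he5⟩ : ∃ e : G, e = (1 - (a : ℤ)) • f3 + f2 + f1 := ⟨_, rfl⟩
  rw [← he5, ← he4, ← he2, ← he1, ← he3] at hS
  have hn2 : ¬ ((2:ℤ) ∣ 1) := by decide
  have h2n1 : ¬ (((2*n : ℕ) : ℤ) ∣ 1) := by
    intro h
    have := Int.le_of_dvd one_pos h
    push_cast at this; omega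
  have hodd : ∀ c2 c3 : ℤ, (1:ℤ) • f1 + c2 • f2 + c3 • f3 = 0 → False := by
    intro c2 c3 h
    have h' : (1:ℤ) • f1 + c2 • f2 + c3 • f3 = 0 := h
    have := (key _ _ _ h').1
    exact hn2 this
  -- pairwise distinctness
  have d12 : e1 ≠ e2 := by
    rw [he1, he2]; intro h
    have : (0:ℤ) • f1 + (1:ℤ) • f2 + (0:ℤ) • f3 = 0 := by
      linear_combination (norm := module) -h
    exact hn2 (key _ _ _ this).2.1
  have d13 : e1 ≠ e3 := by
    rw [he1, he3]; intro h
    have : (0:ℤ) • f1 + (-1:ℤ) • f2 + (1:ℤ) • f3 = 0 := by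
      linear_combination (norm := module) h
    exact h2n1 (key _ _ _ this).2.2
  have d14 : e1 ≠ e4 := by
    rw [he1, he4]; intro h
    exact hodd (0) ((a:ℤ) - 1) (by linear_combination (norm := module) -h)
  have d15 : e1 ≠ e5 := by
    rw [he1, he5]; intro h
    exact hodd 1 (-(a:ℤ)) (by linear_combination (norm := module) -h)
  have d23 : e2 ≠ e3 := by
    rw [he2, he3]; intro h
    have : (0:ℤ) • f1 + (0:ℤ) • f2 + (1:ℤ) • f3 = 0 := by
      linear_combination (norm := module) h
    exact h2n1 (key _ _ _ this).2.2
  have d24 : e2 ≠ e4 := by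
    rw [he2, he4]; intro h
    exact hodd (-1) ((a:ℤ) - 1) (by linear_combination (norm := module) -h)
  have d25 : e2 ≠ e5 := by
    rw [he2, he5]; intro h
    exact hodd 0 (-(a:ℤ)) (by linear_combination (norm := module) -h)
  have d34 : e3 ≠ e4 := by
    rw [he3, he4]; intro h
    exact hodd (-1) (a:ℤ) (by linear_combination (norm := module) -h)
  have d35 : e3 ≠ e5 := by
    rw [he3, he5]; intro h
    exact hodd 0 (1 - (a:ℤ)) (by linear_combination (norm := module) -h)
  have d45 : e4 ≠ e5 := by
    rw [he4, he5]; intro h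
    have : (0:ℤ) • f1 + (1:ℤ) • f2 + (1 - 2 * (a:ℤ)) • f3 = 0 := by
      linear_combination (norm := module) -h
    exact hn2 (key _ _ _ this).2.1
  -- counts in S
  have hSc1 : S.count e1 = 2 * n - 1 - 2 * v := by
    rw [hS]
    simp [Multiset.count_replicate, Multiset.count_cons, Multiset.count_singleton, d12, d13, d14, d15, d23, d24, d25, d34, d35, d45, d12.symm, d13.symm, d14.symm, d15.symm, d23.symm, d24.symm, d25.symm, d34.symm, d35.symm, d45.symm]
  have hSc2 : S.count e2 = 2 * v + 1 := by
    rw [hS]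
    simp [Multiset.count_replicate, Multiset.count_cons, Multiset.count_singleton, d12, d13, d14, d15, d23, d24, d25, d34, d35, d45, d12.symm, d13.symm, d14.symm, d15.symm, d23.symm, d24.symm, d25.symm, d34.symm, d35.symm, d45.symm]
  have hSc3 : S.count e3 = 1 := by
    rw [hS]
    simp [Multiset.count_replicate, Multiset.count_cons, Multiset.count_singleton, d12, d13, d14, d15, d23, d24, d25, d34, d35, d45, d12.symm, d13.symm, d14.symm, d15.symm, d23.symm, d24.symm, d25.symm, d34.symm, d35.symm, d45.symm]
  have hSc4 : S.count e4 = 1 := by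
    rw [hS]
    simp [Multiset.count_replicate, Multiset.count_cons, Multiset.count_singleton, d12, d13, d14, d15, d23, d24, d25, d34, d35, d45, d12.symm, d13.symm, d14.symm, d15.symm, d23.symm, d24.symm, d25.symm, d34.symm, d35.symm, d45.symm]
  have hSc5 : S.count e5 = 1 := by
    rw [hS]
    simp [Multiset.count_replicate, Multiset.count_cons, Multiset.count_singleton, d12, d13, d14, d15, d23, d24, d25, d34, d35, d45, d12.symm, d13.symm, d14.symm, d15.symm, d23.symm, d24.symm, d25.symm, d34.symm, d35.symm, d45.symm]
  have hbx : T.count e1 ≤ 2 * n - 1 - 2 * v := by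
    have := Multiset.count_le_of_le e1 hT; rwa [hSc1] at this
  have hby : T.count e2 ≤ 2 * v + 1 := by
    have := Multiset.count_le_of_le e2 hT; rwa [hSc2] at this
  have hbz : T.count e3 ≤ 1 := by
    have := Multiset.count_le_of_le e3 hT; rwa [hSc3] at this
  have hbu : T.count e4 ≤ 1 := by
    have := Multiset.count_le_of_le e4 hT; rwa [hSc4] at this
  have hbw : T.count e5 ≤ 1 := by
    have := Multiset.count_le_of_le e5 hT; rwa [hSc5] at this
  set x := T.count e1 with hx
  set y := T.count e2 with hy
  set z := T.count e3 with hz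
  set u := T.count e4 with hu
  set w := T.count e5 with hw
  clear_value x y z u w
  -- T is determined by these counts
  have hTeq : T = Multiset.replicate x e1 + Multiset.replicate y e2 +
      Multiset.replicate z e3 + Multiset.replicate u e4 + Multiset.replicate w e5 := by
    ext g
    simp only [Multiset.count_add, Multiset.count_replicate]
    by_cases h1 : g = e1
    · subst h1
      rw [if_pos rfl, if_neg d12.symm, if_neg d13.symm, if_neg d14.symm, if_neg d15.symm]
      omega
    by_cases h2 : g = e2
    · subst h2
      rw [if_neg d12, if_pos rfl, if_neg d23.symm, if_neg d24.symm, if_neg d25.symm]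
      omega
    by_cases h3 : g = e3
    · subst h3
      rw [if_neg d13, if_neg d23, if_pos rfl, if_neg d34.symm, if_neg d35.symm]
      omega
    by_cases h4 : g = e4
    · subst h4
      rw [if_neg d14, if_neg d24, if_neg d34, if_pos rfl, if_neg d45.symm]
      omega
    by_cases h5 : g = e5
    · subst h5
      rw [if_neg d15, if_neg d25, if_neg d35, if_neg d45, if_pos rfl]
      omega
    · have hgS : g ∉ S := by
        rw [hS]; intro hmem
        simp only [Multiset.mem_add, Multiset.mem_replicate, Multiset.insert_eq_cons,
          Multiset.mem_cons, Multiset.mem_singleton] at hmem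
        rcases hmem with ((⟨-, h⟩ | ⟨-, h⟩) | h | h | h)
        · exact h1 h
        · exact h2 h
        · exact h3 h
        · exact h4 h
        · exact h5 h
      have hgT : T.count g = 0 :=
        Multiset.count_eq_zero.mpr (fun h => hgS (Multiset.mem_of_le hT h))
      rw [hgT, if_neg (fun h => h1 h.symm), if_neg (fun h => h2 h.symm),
        if_neg (fun h => h3 h.symm), if_neg (fun h => h4 h.symm), if_neg (fun h => h5 h.symm)]
  have hcardT : Multiset.card T = x + y + z + u + w := by
    rw [hTeq]; simp
  have hpos : 0 < x + y + z + u + w := by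
    rw [← hcardT]
    rcases Nat.eq_zero_or_pos (Multiset.card T) with h | h
    · exact absurd (Multiset.card_eq_zero.mp h) hT0
    · exact h
  have hcard' : x + y + z + u + w ≤ 2 * n := hcardT ▸ hcard
  -- compute the sum
  have hsum' : ((u:ℤ) + w) • f1 + ((y:ℤ) + z + w) • f2 +
      ((x:ℤ) + y + u * a + w * (1 - (a:ℤ))) • f3 = 0 := by
    have : T.sum = ((u:ℤ) + w) • f1 + ((y:ℤ) + z + w) • f2 +
        ((x:ℤ) + y + u * a + w * (1 - (a:ℤ))) • f3 := by
      rw [hTeq]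
      simp only [Multiset.sum_add, Multiset.sum_replicate, he1, he2, he3, he4, he5]
      simp only [← natCast_zsmul]
      module
    rw [← this, hsum]
  obtain ⟨k1, k2, k3⟩ := key _ _ _ hsum'
  have k1' : 2 ∣ u + w := by
    have : ((2:ℕ):ℤ) ∣ ((u + w : ℕ) : ℤ) := by push_cast; exact_mod_cast k1
    exact_mod_cast this
  have k2' : 2 ∣ y + z + w := by
    have : ((2:ℕ):ℤ) ∣ ((y + z + w : ℕ) : ℤ) := by push_cast; exact_mod_cast k2
    exact_mod_cast this
  have hvn : 2 * v ≤ 2 * n - 2 := by omega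
  clear * - hbx hby hbz hbu hbw hcard' hpos k1' k2' k3 hvn hv ha ha' hn
  -- case analysis on u, w
  interval_cases u <;> interval_cases w
  · -- u = 0, w = 0
    simp only [Nat.cast_zero, zero_mul, add_zero] at k3
    have k3' : (2 * n : ℕ) ∣ x + y := by
      have : ((2*n:ℕ):ℤ) ∣ ((x + y : ℕ):ℤ) := by push_cast; exact_mod_cast k3
      exact_mod_cast this
    obtain ⟨m, hm⟩ := k3'
    have hxy : x + y ≤ 2 * n := by omega
    have hm1 : m = 0 ∨ m = 1 := by
      rcases Nat.lt_or_ge m 2 with h | h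
      · omega
      · exfalso; nlinarith
    rcases hm1 with rfl | rfl
    · simp at hm; omega
    · simp at hm; omega
  · simp at k1'
  · simp at k1'
  · -- u = 1, w = 1
    simp only [Nat.cast_one, one_mul] at k3
    have k3x : ((2*n:ℕ):ℤ) ∣ ((x + y + 1 : ℕ):ℤ) := by
      push_cast
      have : ((x:ℤ) + y + a + (1 - a)) = (x:ℤ) + y + 1 := by ring
      rw [← this]; exact_mod_cast k3
    have k3' : (2 * n : ℕ) ∣ x + y + 1 := by exact_mod_cast k3x
    have := Nat.le_of_dvd (by omega) k3'
    omega
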